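/- Let n ≥ 1 and let F be an upset of a De Morgan lattice L. Then F is a consistent prime n-filter on L if and only if there exist k with 1 ≤ k ≤ n and a family G : Fin k → Set L such that each G i is a consistent prime filter on L and F = ⋃ i, G i. -/

import Mathlib

/-- A De Morgan lattice: a distributive lattice with an antitone involution. -/
class DeMorgan (L : Type*) extends DistribLattice L where
  dneg : L → L
  dneg_dneg : ∀ x : L, dneg (dneg x) = x
  dneg_sup : ∀ x y : L, dneg (x ⊔ y) = dneg x ⊓ dneg y

prefix:max "∼" => DeMorgan.dneg

section Defs

variable {α : Type*}

/-- An upward closed subset of a lattice. -/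
def IsUpset [Lattice α] (F : Set α) : Prop :=
  ∀ ⦃x y : α⦄, x ∈ F → x ≤ y → y ∈ F

/-- A lattice filter: an upset closed under binary meets. -/
def IsLatFilter [Lattice α] (F : Set α) : Prop :=
  IsUpset F ∧ ∀ x y : α, x ∈ F → y ∈ F → x ⊓ y ∈ F

/-- An `n`-filter: an upset such that for every nonempty finite `Y`, if the meet of
every nonempty subset of `Y` of size at most `n` lies in `F`, then so does the meet of `Y`. -/
def IsNFilter [Lattice α] (n : ℕ) (F : Set α) : Prop :=
  IsUpset F ∧ ∀ (Y : Finset α) (hY : Y.Nonempty),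
    (∀ (X : Finset α) (hX : X.Nonempty), X ⊆ Y → X.card ≤ n → X.inf' hX id ∈ F) →
    Y.inf' hY id ∈ F

/-- A prime upset: `x ⊔ y ∈ F` implies `x ∈ F` or `y ∈ F`. -/
def IsPrimeUpset [Lattice α] (F : Set α) : Prop :=
  ∀ x y : α, x ⊔ y ∈ F → x ∈ F ∨ y ∈ F

/-- A downward closed subset of a lattice. -/
def IsDownset [Lattice α] (I : Set α) : Prop :=
  ∀ ⦃x y : α⦄, x ∈ I → y ≤ x → y ∈ I

/-- A lattice ideal: a downset closed under binary joins. -/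
def IsIdeal [Lattice α] (I : Set α) : Prop :=
  IsDownset I ∧ ∀ x y : α, x ∈ I → y ∈ I → x ⊔ y ∈ I

/-- An `n`-ideal: the order dual notion of an `n`-filter. -/
def IsNIdeal [Lattice α] (n : ℕ) (I : Set α) : Prop :=
  IsDownset I ∧ ∀ (Y : Finset α) (hY : Y.Nonempty),
    (∀ (X : Finset α) (hX : X.Nonempty), X ⊆ Y → X.card ≤ n → X.sup' hX id ∈ I) →
    Y.sup' hY id ∈ I

variable {L : Type*} [DeMorgan L]

/-- Almost complete upset: `x ∈ F` implies `x ⊓ (y ⊔ ∼y) ∈ F`. -/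
def AlmostComplete (F : Set L) : Prop := ∀ x ∈ F, ∀ y : L, x ⊓ (y ⊔ ∼y) ∈ F

/-- Complete upset: almost complete and nonempty. -/
def IsCompleteUpset (F : Set L) : Prop := AlmostComplete F ∧ F.Nonempty

/-- Almost consistent upset: `(x ⊓ ∼x) ⊔ y ∈ F` implies `y ∈ F`. -/
def AlmostConsistent (F : Set L) : Prop := ∀ x y : L, (x ⊓ ∼x) ⊔ y ∈ F → y ∈ F

/-- Consistent upset: almost consistent and not total. -/
def IsConsistentUpset (F : Set L) : Prop := AlmostConsistent F ∧ F ≠ Set.univ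

/-- Classical upset: complete and consistent. -/
def IsClassicalUpset (F : Set L) : Prop := IsCompleteUpset F ∧ IsConsistentUpset F

/-- Kalman upset. -/
def IsKalmanUpset (F : Set L) : Prop :=
  ∀ x y z u : L, ((x ⊓ ∼x) ⊓ z) ⊔ u ∈ F → ((y ⊔ ∼y) ⊓ z) ⊔ u ∈ F

/-- A homomorphism of De Morgan lattices. -/
def IsDMHom {L M : Type*} [DeMorgan L] [DeMorgan M] (h : L → M) : Prop :=
  (∀ x y : L, h (x ⊓ y) = h x ⊓ h y) ∧ (∀ x y : L, h (x ⊔ y) = h x ⊔ h y) ∧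
    ∀ x : L, h (∼x) = ∼(h x)

/-- The filter generated by all elements of the form `x ⊔ ∼x`. -/
def Fcomp (L : Type*) [DeMorgan L] : Set L :=
  {a | ∃ (s : Finset L) (hs : s.Nonempty), s.inf' hs (fun x => x ⊔ ∼x) ≤ a}

/-- The `n`-filter generated by a set. -/
def nFilterGen (n : ℕ) (U : Set L) : Set L :=
  ⋂₀ {F : Set L | IsNFilter n F ∧ U ⊆ F}

/-- `Comp U`. -/
def CompCl (U : Set L) : Set L := {x | ∃ a ∈ U, ∃ f ∈ Fcomp L, a ⊓ f ≤ x}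

/-- `Cons U`. -/
def ConsCl (U : Set L) : Set L := {x | ∃ f ∈ Fcomp L, ∼f ⊔ x ∈ U}

/-- A congruence of De Morgan lattices, as a binary relation. -/
def IsCongruence (θ : L → L → Prop) : Prop :=
  Equivalence θ ∧
  (∀ a b c d : L, θ a b → θ c d → θ (a ⊓ c) (b ⊓ d)) ∧
  (∀ a b c d : L, θ a b → θ c d → θ (a ⊔ c) (b ⊔ d)) ∧
  ∀ a b : L, θ a b → θ (∼a) (∼b)

end Defs

/-- The four-element De Morgan lattice `DM₁` on `Bool × Bool`. -/
instance : DeMorgan (Bool × Bool) :=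
  { (inferInstance : DistribLattice (Bool × Bool)) with
    dneg := fun p => (!p.2, !p.1)
    dneg_dneg := by decide
    dneg_sup := by decide }

/-- Powers of `DM₁`, with componentwise operations. -/
instance {ι : Type*} : DeMorgan (ι → Bool × Bool) :=
  { (inferInstance : DistribLattice (ι → Bool × Bool)) with
    dneg := fun f i => ∼(f i)
    dneg_dneg := fun f => funext fun i => DeMorgan.dneg_dneg (f i)
    dneg_sup := fun f g => funext fun i => DeMorgan.dneg_sup (f i) (g i) }


section Aux
variable {α : Type*} [DistribLattice α]

/-- Iterated primality over a finite sup. -/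
lemma prime_sup'_mem {P : Set α} (hP : IsPrimeUpset P) {ι : Type*} {s : Finset ι}
    (hs : s.Nonempty) (f : ι → α) (h : s.sup' hs f ∈ P) : ∃ i ∈ s, f i ∈ P := by
  induction hs using Finset.Nonempty.cons_induction with
  | singleton a => exact ⟨a, Finset.mem_singleton_self a, by simpa using h⟩
  | cons a s ha hs ih =>
      rw [Finset.sup'_cons hs] at h
      rcases hP _ _ h with h' | h'
      · exact ⟨a, Finset.mem_cons_self a s, h'⟩
      · obtain ⟨i, hi, hfi⟩ := ih h'
        exact ⟨i, Finset.mem_cons.mpr (Or.inr hi), hfi⟩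

/-- Prime filter extension inside a prime upset. -/
lemma exists_prime_between {F G : Set α} (hFup : IsUpset F) (hFpr : IsPrimeUpset F)
    (hG : IsLatFilter G) (hGF : G ⊆ F) :
    ∃ P : Set α, IsLatFilter P ∧ IsPrimeUpset P ∧ G ⊆ P ∧ P ⊆ F := by
  obtain ⟨M, hGM, hM⟩ := zorn_subset_nonempty
      {P : Set α | IsLatFilter P ∧ G ⊆ P ∧ P ⊆ F}
      (fun c hc hchain hcne => by
        refine ⟨⋃₀ c, ⟨⟨?_, ?_⟩, ?_, ?_⟩, fun s hs => Set.subset_sUnion_of_mem hs⟩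
        · rintro x y ⟨A, hA, hxA⟩ hxy
          exact ⟨A, hA, (hc hA).1.1 hxA hxy⟩
        · rintro x y ⟨A, hA, hxA⟩ ⟨B, hB, hyB⟩
          rcases hchain.total hA hB with hAB | hBA
          · exact ⟨B, hB, (hc hB).1.2 x y (hAB hxA) hyB⟩
          · exact ⟨A, hA, (hc hA).1.2 x y hxA (hBA hyB)⟩
        · obtain ⟨A, hA⟩ := hcne
          exact fun x hx => ⟨A, hA, (hc hA).2.1 hx⟩
        · rintro x ⟨A, hA, hxA⟩
          exact (hc hA).2.2 hxA)
      G ⟨hG, subset_rfl, hGF⟩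
  obtain ⟨hMfil, hGM', hMF⟩ := hM.prop
  refine ⟨M, hMfil, ?_, hGM, hMF⟩
  intro x y hxy
  by_contra hcon
  push_neg at hcon
  obtain ⟨hx, hy⟩ := hcon
  have hesc : ∀ z : α, z ∉ M → ∃ p ∈ M, p ⊓ z ∉ F := by
    intro z hz
    by_contra hok
    push_neg at hok
    set N := {w : α | ∃ p ∈ M, p ⊓ z ≤ w} with hN
    have hfil : IsLatFilter N := by
      constructor
      · rintro u v ⟨p, hp, hpu⟩ huv; exact ⟨p, hp, hpu.trans huv⟩
      · rintro u v ⟨p, hp, hpu⟩ ⟨q, hq, hqv⟩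
        refine ⟨p ⊓ q, hMfil.2 p q hp hq, le_inf ?_ ?_⟩
        · exact le_trans (inf_le_inf_right z inf_le_left) hpu
        · exact le_trans (inf_le_inf_right z inf_le_right) hqv
    have hMN : M ⊆ N := fun p hp => ⟨p, hp, inf_le_left⟩
    have hNF : N ⊆ F := by
      rintro w ⟨p, hp, hpw⟩
      exact hFup (hok p hp) hpw
    have hNM : N ⊆ M := hM.2 ⟨hfil, hGM'.trans hMN, hNF⟩ hMN
    exact hz (hNM ⟨x ⊔ y, hxy, inf_le_right⟩)
  obtain ⟨p, hp, hpx⟩ := hesc x hx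
  obtain ⟨q, hq, hqy⟩ := hesc y hy
  have hr : (p ⊓ q) ⊓ (x ⊔ y) ∈ F := hMF (hMfil.2 _ _ (hMfil.2 p q hp hq) hxy)
  rw [inf_sup_left] at hr
  rcases hFpr _ _ hr with h' | h'
  · exact hpx (hFup h' (inf_le_inf_right x inf_le_left))
  · exact hqy (hFup h' (inf_le_inf_right y inf_le_right))

end Aux

section Closure
variable {α : Type*} [DistribLattice α] [DecidableEq α]

lemma exists_latClosure (S : Finset α) :
    ∃ D : Finset α, S ⊆ D ∧ (∀ x ∈ D, ∀ y ∈ D, x ⊓ y ∈ D) ∧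
      (∀ x ∈ D, ∀ y ∈ D, x ⊔ y ∈ D) := by
  classical
  set meets : Finset α := (S.powerset.filter (fun t => t.Nonempty)).attach.image
      (fun t => t.1.inf' (Finset.mem_filter.mp t.2).2 id) with hmeets
  have hmem_meets : ∀ (t : Finset α) (ht : t.Nonempty), t ⊆ S → t.inf' ht id ∈ meets := by
    intro t ht hts
    have h1 : t ∈ S.powerset.filter (fun t => t.Nonempty) :=
      Finset.mem_filter.mpr ⟨Finset.mem_powerset.mpr hts, ht⟩
    exact Finset.mem_image.mpr ⟨⟨t, h1⟩, Finset.mem_attach _ _, rfl⟩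
  have hmeets_elim : ∀ a ∈ meets, ∃ (t : Finset α) (ht : t.Nonempty),
      t ⊆ S ∧ a = t.inf' ht id := by
    intro a ha
    obtain ⟨⟨t, ht⟩, -, rfl⟩ := Finset.mem_image.mp ha
    exact ⟨t, (Finset.mem_filter.mp ht).2,
      Finset.mem_powerset.mp (Finset.mem_filter.mp ht).1, rfl⟩
  have hmeets_inf : ∀ a ∈ meets, ∀ b ∈ meets, a ⊓ b ∈ meets := by
    intro a ha b hb
    obtain ⟨t1, ht1, ht1S, rfl⟩ := hmeets_elim a ha
    obtain ⟨t2, ht2, ht2S, rfl⟩ := hmeets_elim b hb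
    rw [← Finset.inf'_union ht1 ht2 id]
    exact hmem_meets _ _ (Finset.union_subset ht1S ht2S)
  set D : Finset α := (meets.powerset.filter (fun u => u.Nonempty)).attach.image
      (fun u => u.1.sup' (Finset.mem_filter.mp u.2).2 id) with hD
  have hmem_D : ∀ (u : Finset α) (hu : u.Nonempty), u ⊆ meets → u.sup' hu id ∈ D := by
    intro u hu hum
    have h1 : u ∈ meets.powerset.filter (fun u => u.Nonempty) :=
      Finset.mem_filter.mpr ⟨Finset.mem_powerset.mpr hum, hu⟩
    exact Finset.mem_image.mpr ⟨⟨u, h1⟩, Finset.mem_attach _ _, rfl⟩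
  have hD_elim : ∀ a ∈ D, ∃ (u : Finset α) (hu : u.Nonempty),
      u ⊆ meets ∧ a = u.sup' hu id := by
    intro a ha
    obtain ⟨⟨u, hu⟩, -, rfl⟩ := Finset.mem_image.mp ha
    exact ⟨u, (Finset.mem_filter.mp hu).2,
      Finset.mem_powerset.mp (Finset.mem_filter.mp hu).1, rfl⟩
  refine ⟨D, ?_, ?_, ?_⟩
  · intro x hx
    have : ({x} : Finset α).inf' (Finset.singleton_nonempty x) id ∈ meets :=
      hmem_meets _ _ (Finset.singleton_subset_iff.mpr hx)
    rw [Finset.inf'_singleton] at this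
    have h2 := hmem_D {x} (Finset.singleton_nonempty x) (Finset.singleton_subset_iff.mpr this)
    rwa [Finset.sup'_singleton] at h2
  · intro x hx y hy
    obtain ⟨u1, hu1, hu1m, rfl⟩ := hD_elim x hx
    obtain ⟨u2, hu2, hu2m, rfl⟩ := hD_elim y hy
    rw [Finset.sup'_inf_sup']
    have : (u1 ×ˢ u2).sup' (hu1.product hu2) (fun i => id i.1 ⊓ id i.2) =
        ((u1 ×ˢ u2).image (fun i => i.1 ⊓ i.2)).sup'
          ((hu1.product hu2).image _) id := by
      rw [Finset.sup'_image]
      rfl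
    rw [this]
    refine hmem_D _ _ ?_
    intro a ha
    obtain ⟨⟨a1, a2⟩, hpair, rfl⟩ := Finset.mem_image.mp ha
    obtain ⟨h1, h2⟩ := Finset.mem_product.mp hpair
    exact hmeets_inf _ (hu1m h1) _ (hu2m h2)
  · intro x hx y hy
    obtain ⟨u1, hu1, hu1m, rfl⟩ := hD_elim x hx
    obtain ⟨u2, hu2, hu2m, rfl⟩ := hD_elim y hy
    rw [← Finset.sup'_union hu1 hu2 id]
    exact hmem_D _ _ (Finset.union_subset hu1m hu2m)

end Closure

section Color
variable {α : Type*} [DistribLattice α]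

/-- `c` is a good coloring on `S`: monochromatic finite subsets of `S ∩ F` have meets in `F`. -/
def GoodOn {n : ℕ} (F : Set α) (c : α → Fin n) (S : Finset α) : Prop :=
  ∀ T : Finset α, T ⊆ S → (∀ x ∈ T, x ∈ F) → (∀ x ∈ T, ∀ y ∈ T, c x = c y) →
    ∀ hT : T.Nonempty, T.inf' hT id ∈ F

lemma color_finite {n : ℕ} (hn : 1 ≤ n) {F : Set α} (hFup : IsUpset F)
    (hFpr : IsPrimeUpset F) (hFn : IsNFilter n F) (S : Finset α) :
    ∃ c : α → Fin n, GoodOn F c S := by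
  classical
  obtain ⟨D, hSD, hDm, hDj⟩ := exists_latClosure S
  set PP : Set (Set α) :=
    {A | ∃ P : Set α, IsLatFilter P ∧ IsPrimeUpset P ∧ P ⊆ F ∧ A = P ∩ ↑D} with hPP
  have hPPfin : PP.Finite := by
    refine (D.finite_toSet.finite_subsets).subset ?_
    rintro A ⟨P, -, -, -, rfl⟩
    exact Set.inter_subset_right
  set Mx : Set (Set α) := {A | A ∈ PP ∧ ∀ B ∈ PP, A ⊆ B → A = B} with hMx
  have hMxfin : Mx.Finite := hPPfin.subset (fun A hA => hA.1)
  have hmax : ∀ A ∈ PP, ∃ M ∈ Mx, A ⊆ M := by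
    intro A hA
    obtain ⟨M, hM, hMmax⟩ := Set.Finite.exists_maximalFor id {B ∈ PP | A ⊆ B}
      (hPPfin.subset (fun B hB => hB.1)) ⟨A, hA, subset_rfl⟩
    exact ⟨M, ⟨hM.1, fun B hB hMB => hMB.antisymm (hMmax ⟨hB, hM.2.trans hMB⟩ hMB)⟩, hM.2⟩
  have key : ∀ x ∈ F, x ∈ D → ∃ M ∈ Mx, x ∈ M := by
    intro x hxF hxD
    obtain ⟨P, hPfil, hPpr, hIP, hPF⟩ := exists_prime_between hFup hFpr
      (G := Set.Ici x) ⟨fun a b ha hab => le_trans ha hab,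
        fun a b ha hb => le_inf ha hb⟩ (fun a ha => hFup hxF ha)
    obtain ⟨M, hM, hPM⟩ := hmax (P ∩ ↑D) ⟨P, hPfil, hPpr, hPF, rfl⟩
    exact ⟨M, hM, hPM ⟨hIP Set.self_mem_Ici, hxD⟩⟩
  set t : Finset (Set α) := hMxfin.toFinset with ht
  have hMxt : ∀ A : Set α, A ∈ t ↔ A ∈ Mx := fun A => hMxfin.mem_toFinset
  have hcard : t.card ≤ n := by
    by_contra hgt
    push_neg at hgt
    have hcardt : Fintype.card {A // A ∈ t} = t.card := Fintype.card_coe t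
    have h2le : 1 < Fintype.card {A // A ∈ t} := by omega
    haveI : Nonempty {A // A ∈ t} := by
      rw [← Fintype.card_pos_iff]; omega
    have hPex : ∀ i : {A // A ∈ t}, ∃ P : Set α,
        IsLatFilter P ∧ IsPrimeUpset P ∧ P ⊆ F ∧ (i : Set α) = P ∩ ↑D := by
      intro i
      obtain ⟨hmem, -⟩ := (hMxt _).mp i.2
      exact hmem
    choose P hPfil hPpr hPF hPeq using hPex
    have htrP : ∀ i : {A // A ∈ t}, (i : Set α) ⊆ P i := by
      intro i; rw [hPeq i]; exact Set.inter_subset_left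
    have htrD : ∀ i : {A // A ∈ t}, (i : Set α) ⊆ ↑D := by
      intro i; rw [hPeq i]; exact Set.inter_subset_right
    have hnotsub : ∀ i j : {A // A ∈ t}, i ≠ j → ¬ ((i : Set α) ⊆ (j : Set α)) := by
      intro i j hij hsub
      exact hij (Subtype.ext (((hMxt _).mp i.2).2 _ ((hMxt _).mp j.2).1 hsub))
    have hne : ∀ i : {A // A ∈ t}, (i : Set α).Nonempty := by
      intro i
      obtain ⟨j, hj⟩ := Fintype.exists_ne_of_one_lt_card h2le i
      obtain ⟨z, hz, -⟩ := Set.not_subset.mp (hnotsub i j (Ne.symm hj))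
      exact ⟨z, hz⟩
    have hwit : ∀ i j : {A // A ∈ t}, ∃ z, z ∈ (i : Set α) ∧ (i ≠ j → z ∉ (j : Set α)) := by
      intro i j
      by_cases hij : i = j
      · obtain ⟨z, hz⟩ := hne i; exact ⟨z, hz, fun h => absurd hij h⟩
      · obtain ⟨z, hz1, hz2⟩ := Set.not_subset.mp (hnotsub i j hij)
        exact ⟨z, hz1, fun _ => hz2⟩
    choose g hg1 hg2 using hwit
    have herase : ∀ i : {A // A ∈ t}, (Finset.univ.erase i).Nonempty := by
      intro i
      obtain ⟨j, hj⟩ := Fintype.exists_ne_of_one_lt_card h2le i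
      exact ⟨j, Finset.mem_erase.mpr ⟨hj, Finset.mem_univ _⟩⟩
    set a : {A // A ∈ t} → α := fun i => (Finset.univ.erase i).inf' (herase i) (g i) with ha
    have hDm' : ∀ x ∈ (↑D : Set α), ∀ y ∈ (↑D : Set α), x ⊓ y ∈ (↑D : Set α) := by
      intro x hx y hy; exact_mod_cast hDm x hx y hy
    have hDj' : ∀ x ∈ (↑D : Set α), ∀ y ∈ (↑D : Set α), x ⊔ y ∈ (↑D : Set α) := by
      intro x hx y hy; exact_mod_cast hDj x hx y hy
    have haP : ∀ i, a i ∈ P i := fun i =>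
      Finset.inf'_mem (P i) (fun x hx y hy => (hPfil i).2 x y hx hy) _ (herase i) (g i)
        (fun j _ => htrP i (hg1 i j))
    have haD : ∀ i, a i ∈ (↑D : Set α) := fun i =>
      Finset.inf'_mem (↑D : Set α) hDm' _ (herase i) (g i)
        (fun j _ => htrD i (hg1 i j))
    have haNj : ∀ i j, i ≠ j → a i ∉ P j := by
      intro i j hij hmem
      have h1 : g i j ∈ P j :=
        (hPfil j).1 hmem (Finset.inf'_le (g i)
          (Finset.mem_erase.mpr ⟨Ne.symm hij, Finset.mem_univ _⟩))
      have h2 : g i j ∈ (j : Set α) := by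
        rw [hPeq j]; exact ⟨h1, htrD i (hg1 i j)⟩
      exact hg2 i j hij h2
    set cc : {A // A ∈ t} → α := fun i => (Finset.univ.erase i).sup' (herase i) a with hcc
    have hccD : ∀ i, cc i ∈ (↑D : Set α) := fun i =>
      Finset.sup'_mem (↑D : Set α) hDj' _ (herase i) a (fun j _ => haD j)
    have hccP : ∀ i j : {A // A ∈ t}, i ≠ j → cc j ∈ P i := by
      intro i j hij
      exact (hPfil i).1 (haP i)
        (Finset.le_sup' a (Finset.mem_erase.mpr ⟨hij, Finset.mem_univ _⟩))
    have hccN : ∀ i, cc i ∉ P i := by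
      intro i hmem
      obtain ⟨l, hl, hla⟩ := prime_sup'_mem (hPpr i) (herase i) a hmem
      exact haNj l i (Finset.mem_erase.mp hl).1 hla
    have hccinj : Function.Injective cc := by
      intro i j hij
      by_contra hne'
      exact hccN i (hij ▸ hccP i j hne')
    set Y : Finset α := Finset.univ.image cc with hY
    have hYne : Y.Nonempty := (Finset.univ_nonempty).image cc
    have hYcard : Y.card = Fintype.card {A // A ∈ t} := by
      rw [hY, Finset.card_image_of_injective _ hccinj, Finset.card_univ]
    have hsubm : ∀ (X : Finset α) (hX : X.Nonempty), X ⊆ Y → X.card ≤ n →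
        X.inf' hX id ∈ F := by
      intro X hX hXY hXn
      have hEx : ∃ j : {A // A ∈ t}, cc j ∉ X := by
        by_contra hall
        push_neg at hall
        have hYX : Y ⊆ X := by
          intro y hy
          obtain ⟨j, -, rfl⟩ := Finset.mem_image.mp hy
          exact hall j
        have := Finset.card_le_card hYX
        omega
      obtain ⟨j₀, hj₀⟩ := hEx
      refine hPF j₀ (Finset.inf'_mem (P j₀) (fun x hx y hy => (hPfil j₀).2 x y hx hy) X hX id ?_)
      intro z hz
      obtain ⟨l, -, rfl⟩ := Finset.mem_image.mp (hXY hz)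
      have hl : j₀ ≠ l := by rintro rfl; exact hj₀ hz
      exact hccP j₀ l hl
    have hd : Y.inf' hYne id ∈ F := hFn.2 Y hYne hsubm
    have hdD : Y.inf' hYne id ∈ (↑D : Set α) := by
      refine Finset.inf'_mem (↑D : Set α) hDm' Y hYne id ?_
      intro z hz
      obtain ⟨l, -, rfl⟩ := Finset.mem_image.mp hz
      exact hccD l
    obtain ⟨M, hMmx, hdM⟩ := key _ hd (by exact_mod_cast hdD)
    set l : {A // A ∈ t} := ⟨M, (hMxt M).mpr hMmx⟩ with hl
    have hdP : Y.inf' hYne id ∈ P l := htrP l hdM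
    have hdc : Y.inf' hYne id ≤ cc l :=
      Finset.inf'_le id (Finset.mem_image.mpr ⟨l, Finset.mem_univ _, rfl⟩)
    exact hccN l ((hPfil l).1 hdP hdc)
  -- now build the coloring from at most `n` maximal traces
  have hembcard : Fintype.card {A // A ∈ t} ≤ Fintype.card (Fin n) := by
    rw [Fintype.card_coe, Fintype.card_fin]; exact hcard
  obtain ⟨emb⟩ := Function.Embedding.nonempty_of_card_le hembcard
  refine ⟨fun z => if h : ∃ i : {A // A ∈ t}, z ∈ (i : Set α) then emb h.choose
    else ⟨0, hn⟩, ?_⟩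
  intro T hTS hTF hmono hT
  obtain ⟨x₀, hx₀⟩ := hT
  have hEx : ∀ x ∈ T, ∃ i : {A // A ∈ t}, x ∈ (i : Set α) := by
    intro x hx
    obtain ⟨M, hM, hxM⟩ := key x (hTF x hx) (hSD (hTS hx))
    exact ⟨⟨M, (hMxt M).mpr hM⟩, hxM⟩
  have hT_sub : ∀ x ∈ T, x ∈ ((hEx x₀ hx₀).choose : Set α) := by
    intro x hx
    have h1 := hmono x hx x₀ hx₀
    simp only [] at h1
    rw [dif_pos (hEx x hx), dif_pos (hEx x₀ hx₀)] at h1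
    have h2 := emb.injective h1
    rw [← h2]
    exact (hEx x hx).choose_spec
  obtain ⟨P₀, hP₀fil, hP₀pr, hP₀F, hP₀eq⟩ := ((hMxt _).mp (hEx x₀ hx₀).choose.2).1
  refine hP₀F (Finset.inf'_mem P₀ (fun x hx y hy => hP₀fil.2 x y hx hy) T ⟨x₀, hx₀⟩ id ?_)
  intro x hx
  have h3 := hT_sub x hx
  rw [hP₀eq] at h3
  exact h3.1

end Color

section Compact
variable {α : Type*} [DistribLattice α]

lemma exists_global_coloring {n : ℕ} (hn : 1 ≤ n) {F : Set α} (hFup : IsUpset F)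
    (hFpr : IsPrimeUpset F) (hFn : IsNFilter n F) :
    ∃ c : α → Fin n, ∀ S : Finset α, GoodOn F c S := by
  classical
  letI : TopologicalSpace (Fin n) := ⊥
  haveI : DiscreteTopology (Fin n) := ⟨rfl⟩
  have hC : ∀ S : Finset α, IsClosed {c : α → Fin n | GoodOn F c S} := by
    intro S
    rw [← isOpen_compl_iff, isOpen_iff_forall_mem_open]
    intro c hc
    refine ⟨{c' | ∀ x ∈ S, c' x = c x}, ?_, ?_, fun x hx => rfl⟩
    · intro c' hc' hgood
      apply hc
      intro T hTS hTF hmono hT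
      refine hgood T hTS hTF ?_ hT
      intro x hx y hy
      rw [hc' x (hTS hx), hc' y (hTS hy)]
      exact hmono x hx y hy
    · have : {c' : α → Fin n | ∀ x ∈ S, c' x = c x} =
          ⋂ x ∈ S, (fun c' : α → Fin n => c' x) ⁻¹' {c x} := by
        ext c'; simp [Set.mem_iInter]
      rw [this]
      exact isOpen_biInter_finset fun x _ =>
        (continuous_apply x).isOpen_preimage _ (isOpen_discrete _)
  have hdir : Directed (· ⊇ ·) (fun S : Finset α => {c : α → Fin n | GoodOn F c S}) := by
    intro S S'
    refine ⟨S ∪ S', ?_, ?_⟩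
    · intro c hc T hTsub hTF hmono hT
      exact hc T (hTsub.trans Finset.subset_union_left) hTF hmono hT
    · intro c hc T hTsub hTF hmono hT
      exact hc T (hTsub.trans Finset.subset_union_right) hTF hmono hT
  obtain ⟨c, hc⟩ := IsCompact.nonempty_iInter_of_directed_nonempty_isCompact_isClosed
    (fun S : Finset α => {c : α → Fin n | GoodOn F c S}) hdir
    (fun S => color_finite hn hFup hFpr hFn S)
    (fun S => (hC S).isCompact) hC
  exact ⟨c, fun S => Set.mem_iInter.mp hc S⟩

end Compact

/-- consistent prime `n`-filters are precisely unions of at most `n`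
consistent prime filters. -/
theorem statement2 {L : Type*} [DeMorgan L] [Nonempty L] (n : ℕ) (hn : 1 ≤ n)
    (F : Set L) (hF : IsUpset F) :
    (IsConsistentUpset F ∧ IsPrimeUpset F ∧ IsNFilter n F) ↔
      ∃ k : ℕ, 1 ≤ k ∧ k ≤ n ∧ ∃ G : Fin k → Set L,
        (∀ i : Fin k, IsConsistentUpset (G i) ∧ IsPrimeUpset (G i) ∧ IsLatFilter (G i)) ∧
        F = ⋃ i : Fin k, G i := by
  classical
  constructor
  · rintro ⟨hFcons, hFpr, hFn⟩
    obtain ⟨c, hc⟩ := exists_global_coloring hn hF hFpr hFn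
    set G0 : Fin n → Set L := fun i => {y | ∃ T : Finset L, ∃ hT : T.Nonempty,
      (∀ x ∈ T, x ∈ F) ∧ (∀ x ∈ T, c x = i) ∧ T.inf' hT id ≤ y} with hG0
    have hG0fil : ∀ i, IsLatFilter (G0 i) := by
      intro i
      constructor
      · rintro u v ⟨T, hT, h1, h2, h3⟩ huv; exact ⟨T, hT, h1, h2, h3.trans huv⟩
      · rintro u v ⟨T1, hT1, h11, h12, h13⟩ ⟨T2, hT2, h21, h22, h23⟩
        refine ⟨T1 ∪ T2, hT1.mono Finset.subset_union_left, ?_, ?_, ?_⟩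
        · intro x hx; rcases Finset.mem_union.mp hx with h | h
          exacts [h11 x h, h21 x h]
        · intro x hx; rcases Finset.mem_union.mp hx with h | h
          exacts [h12 x h, h22 x h]
        · rw [Finset.inf'_union hT1 hT2 id]
          exact inf_le_inf h13 h23
    have hG0F : ∀ i, G0 i ⊆ F := by
      rintro i y ⟨T, hT, h1, h2, h3⟩
      refine hF (hc T T subset_rfl h1 (fun x hx y' hy' => ?_) hT) h3
      rw [h2 x hx, h2 y' hy']
    have hFsub : ∀ x ∈ F, x ∈ G0 (c x) := by
      intro x hx
      exact ⟨{x}, Finset.singleton_nonempty x, by simpa using hx, by simp,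
        by simp [Finset.inf'_singleton]⟩
    have hPex : ∀ i, ∃ P : Set L, IsLatFilter P ∧ IsPrimeUpset P ∧ G0 i ⊆ P ∧ P ⊆ F :=
      fun i => exists_prime_between hF hFpr (hG0fil i) (hG0F i)
    choose P hPfil hPpr hPsub hPF using hPex
    refine ⟨n, hn, le_rfl, P, ?_, ?_⟩
    · intro i
      refine ⟨⟨?_, ?_⟩, hPpr i, hPfil i⟩
      · intro x y hxy
        rcases hPpr i _ _ hxy with h | h
        · exfalso
          refine hFcons.2 (Set.eq_univ_of_forall fun z => ?_)
          exact hFcons.1 x z (hF (hPF i h) le_sup_left)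
        · exact h
      · intro huniv
        exact hFcons.2 (Set.eq_univ_of_univ_subset (huniv ▸ hPF i))
    · ext x
      simp only [Set.mem_iUnion]
      constructor
      · intro hx; exact ⟨c x, hPsub _ (hFsub x hx)⟩
      · rintro ⟨i, hi⟩; exact hPF i hi
  · rintro ⟨k, hk1, hkn, G, hG, rfl⟩
    haveI : Nonempty (Fin k) := ⟨⟨0, hk1⟩⟩
    refine ⟨⟨?_, ?_⟩, ?_, hF, ?_⟩
    · intro x y hxy
      rw [Set.mem_iUnion] at hxy ⊢
      obtain ⟨i, hi⟩ := hxy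
      exact ⟨i, (hG i).1.1 x y hi⟩
    · intro huniv
      have hb : ∀ i : Fin k, ∃ b, b ∉ G i := by
        intro i
        exact (Set.ne_univ_iff_exists_notMem _).mp (hG i).1.2
      choose b hb using hb
      have hmem : Finset.univ.inf' Finset.univ_nonempty b ∈ ⋃ i, G i := by
        rw [huniv]; exact Set.mem_univ _
      rw [Set.mem_iUnion] at hmem
      obtain ⟨i, hi⟩ := hmem
      exact hb i ((hG i).2.2.1 hi (Finset.inf'_le b (Finset.mem_univ i)))
    · intro x y hxy
      rw [Set.mem_iUnion] at hxy
      obtain ⟨i, hi⟩ := hxy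
      rcases (hG i).2.1 x y hi with h | h
      · exact Or.inl (Set.mem_iUnion.mpr ⟨i, h⟩)
      · exact Or.inr (Set.mem_iUnion.mpr ⟨i, h⟩)
    · intro Y hY H
      have hcov : ∃ i : Fin k, ∀ y ∈ Y, y ∈ G i := by
        by_contra hno
        push_neg at hno
        choose yv hyv1 hyv2 using hno
        have hXne : (Finset.univ.image yv).Nonempty := Finset.univ_nonempty.image yv
        have hXY : Finset.univ.image yv ⊆ Y := by
          intro z hz; obtain ⟨i, -, rfl⟩ := Finset.mem_image.mp hz; exact hyv1 i
        have hXcard : (Finset.univ.image yv).card ≤ n :=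
          le_trans (le_trans Finset.card_image_le (by simp)) hkn
        have hin := H _ hXne hXY hXcard
        obtain ⟨i, hi⟩ := Set.mem_iUnion.mp hin
        exact hyv2 i ((hG i).2.2.1 hi
          (Finset.inf'_le id (Finset.mem_image.mpr ⟨i, Finset.mem_univ i, rfl⟩)))
      obtain ⟨i, hi⟩ := hcov
      exact Set.mem_iUnion.mpr ⟨i, Finset.inf'_mem (G i)
        (fun x hx y hy => (hG i).2.2.2 x y hx hy) Y hY id hi⟩
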